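/- arXiv:0706.2606 — 4 statements merged into one kernel-verified Lean document; each statement's English description precedes it below -/
import Mathlib

section
/- Let ρ_{XB} be a density matrix classical on H_X. For any normalized σ_B on H_B, the L1-distance from uniform satisfies d(ρ_{XB}|B) ≤ sqrt(dim H_X) · sqrt(d_2(ρ_{XB}|σ_B)), where d_2 is the conditional L2-distance from uniform relative to σ_B. -/
open Matrix BigOperators Finset
open scoped Kronecker ComplexOrder

/-- Bit strings of length `n`. -/
abbrev BS (n : ℕ) := Fin n → ZMod 2

/-- `(-1)^(α·x)` where `α·x` is the inner product mod 2. -/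
noncomputable def sgn {n : ℕ} (α x : BS n) : ℝ :=
  if (∑ i, α i * x i) = 0 then 1 else -1

/-- Fourier transform of a matrix-valued function on the hypercube. -/
noncomputable def Ftrans {n d : ℕ} (M : BS n → Matrix (Fin d) (Fin d) ℂ) :
    BS n → Matrix (Fin d) (Fin d) ℂ :=
  fun α => ((Real.sqrt (2 ^ n) : ℂ))⁻¹ • ∑ x, (sgn α x : ℂ) • M x
/-- Trace norm (Schatten 1-norm) of a complex matrix: `tr √(Aᴴ A)`. -/
noncomputable def traceNorm {m : Type*} [Fintype m] [DecidableEq m]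
    (A : Matrix m m ℂ) : ℝ :=
  (((Matrix.posSemidef_conjTranspose_mul_self A).1.eigenvectorUnitary.1 *
      diagonal (((↑) : ℝ → ℂ) ∘ (√·) ∘ (Matrix.posSemidef_conjTranspose_mul_self A).1.eigenvalues) *
      (star (Matrix.posSemidef_conjTranspose_mul_self A).1.eigenvectorUnitary : Matrix m m ℂ)).trace).re

section Aux
set_option linter.unusedSectionVars false
variable {m : Type*} [Fintype m] [DecidableEq m]

lemma trace_mul_herm (M N : Matrix m m ℂ) (hN : N.IsHermitian) :
    (M * N).trace = ∑ p : m × m, M p.1 p.2 * (starRingEnd ℂ) (N p.1 p.2) := by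
  rw [Matrix.trace, Fintype.sum_prod_type]
  simp only [Matrix.diag, Matrix.mul_apply]
  refine Finset.sum_congr rfl fun i _ => Finset.sum_congr rfl fun j _ => ?_
  rw [← hN.apply i j, starRingEnd_apply, star_star]

lemma trace_sq_re (M : Matrix m m ℂ) (hM : M.IsHermitian) :
    (M * M).trace.re = ∑ p : m × m, ‖M p.1 p.2‖ ^ 2 := by
  rw [trace_mul_herm M M hM, Complex.re_sum]
  refine Finset.sum_congr rfl fun p _ => ?_
  rw [Complex.mul_conj, Complex.sq_norm, Complex.ofReal_re]

lemma trace_sq_re_nonneg (M : Matrix m m ℂ) (hM : M.IsHermitian) :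
    0 ≤ (M * M).trace.re := by
  rw [trace_sq_re M hM]
  exact Finset.sum_nonneg fun p _ => sq_nonneg _

lemma trace_cs (M N : Matrix m m ℂ) (hM : M.IsHermitian) (hN : N.IsHermitian) :
    (M * N).trace.re ≤
      Real.sqrt ((M * M).trace.re) * Real.sqrt ((N * N).trace.re) := by
  set f : m × m → ℝ := fun p => ‖M p.1 p.2‖
  set g : m × m → ℝ := fun p => ‖N p.1 p.2‖
  have h1 : (M * N).trace.re ≤ ∑ p : m × m, f p * g p := by
    calc (M * N).trace.re ≤ ‖(M * N).trace‖ := Complex.re_le_norm _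
    _ = ‖∑ p : m × m, M p.1 p.2 * (starRingEnd ℂ) (N p.1 p.2)‖ := by
        rw [trace_mul_herm M N hN]
    _ ≤ ∑ p : m × m, ‖M p.1 p.2 * (starRingEnd ℂ) (N p.1 p.2)‖ :=
        norm_sum_le _ _
    _ = ∑ p : m × m, f p * g p := by
        refine Finset.sum_congr rfl fun p _ => ?_
        rw [norm_mul, Complex.norm_conj]
  have h2 : ∑ p : m × m, f p * g p ≤
      Real.sqrt (∑ p : m × m, f p ^ 2) * Real.sqrt (∑ p : m × m, g p ^ 2) := by
    have hcs := Finset.sum_mul_sq_le_sq_mul_sq Finset.univ f g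
    have hnn : 0 ≤ ∑ p : m × m, f p * g p :=
      Finset.sum_nonneg fun p _ => mul_nonneg (norm_nonneg _) (norm_nonneg _)
    calc ∑ p : m × m, f p * g p = Real.sqrt ((∑ p : m × m, f p * g p) ^ 2) :=
          (Real.sqrt_sq hnn).symm
    _ ≤ Real.sqrt ((∑ p : m × m, f p ^ 2) * (∑ p : m × m, g p ^ 2)) :=
          Real.sqrt_le_sqrt hcs
    _ = Real.sqrt (∑ p : m × m, f p ^ 2) * Real.sqrt (∑ p : m × m, g p ^ 2) :=
          Real.sqrt_mul (Finset.sum_nonneg fun p _ => sq_nonneg _) _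
  rw [trace_sq_re M hM, trace_sq_re N hN]
  exact h1.trans h2

lemma herm_mul3 {P Q : Matrix m m ℂ} (hP : P.IsHermitian) (hQ : Q.IsHermitian) :
    (P * Q * P).IsHermitian := by
  rw [Matrix.IsHermitian, Matrix.conjTranspose_mul, Matrix.conjTranspose_mul,
    hP.eq, hQ.eq, Matrix.mul_assoc]

lemma herm_mul_self {P : Matrix m m ℂ} (hP : P.IsHermitian) : (P * P).IsHermitian := by
  rw [Matrix.IsHermitian, Matrix.conjTranspose_mul, hP.eq]

lemma conj_diag_mul (U : Matrix m m ℂ) (hU1 : Uᴴ * U = 1) (v w : m → ℂ) :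
    (U * Matrix.diagonal v * Uᴴ) * (U * Matrix.diagonal w * Uᴴ)
      = U * Matrix.diagonal (fun i => v i * w i) * Uᴴ := by
  calc (U * Matrix.diagonal v * Uᴴ) * (U * Matrix.diagonal w * Uᴴ)
      = U * Matrix.diagonal v * (Uᴴ * U) * Matrix.diagonal w * Uᴴ := by
        simp only [Matrix.mul_assoc]
    _ = U * (Matrix.diagonal v * Matrix.diagonal w) * Uᴴ := by
        rw [hU1]; simp only [Matrix.mul_one, Matrix.mul_assoc]
    _ = U * Matrix.diagonal (fun i => v i * w i) * Uᴴ := by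
        rw [Matrix.diagonal_mul_diagonal]

lemma trace_conj_diag (U : Matrix m m ℂ) (hU1 : Uᴴ * U = 1) (v : m → ℂ) :
    (U * Matrix.diagonal v * Uᴴ).trace = ∑ i, v i := by
  rw [Matrix.trace_mul_cycle, hU1, Matrix.one_mul, Matrix.trace_diagonal]

lemma herm_conj_diag (U : Matrix m m ℂ) (v : m → ℝ) :
    (U * Matrix.diagonal (fun i => (v i : ℂ)) * Uᴴ).IsHermitian := by
  have hv : (star fun i => ((v i : ℝ) : ℂ)) = fun i => ((v i : ℝ) : ℂ) := by
    funext i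
    simp [Pi.star_apply, Complex.star_def, Complex.conj_ofReal]
  rw [Matrix.IsHermitian, Matrix.conjTranspose_mul, Matrix.conjTranspose_mul,
    Matrix.conjTranspose_conjTranspose, Matrix.diagonal_conjTranspose, hv,
    Matrix.mul_assoc]

/-- Key inequality: `‖A‖₁ ≤ √(tr (s⁴)⁻¹) · √(tr (sAs)²)` for Hermitian `A`
and invertible Hermitian `s`. -/
lemma key_lemma (A s : Matrix m m ℂ) (hA : A.IsHermitian) (hs : s.IsHermitian)
    (hdet : IsUnit s.det) :
    traceNorm A ≤ Real.sqrt (((s ^ 4)⁻¹).trace.re) *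
      Real.sqrt (((s * A * s) ^ 2).trace.re) := by
  classical
  set t : Matrix m m ℂ := s⁻¹ with ht_def
  have hst : s * t = 1 := Matrix.mul_nonsing_inv s hdet
  have hts : t * s = 1 := Matrix.nonsing_inv_mul s hdet
  have ht : t.IsHermitian := hs.inv
  -- eigendecomposition
  set U : Matrix m m ℂ := (Matrix.IsHermitian.eigenvectorUnitary hA : Matrix m m ℂ) with hU_def
  have hU1 : Uᴴ * U = 1 := by
    rw [← Matrix.star_eq_conjTranspose]
    exact Matrix.mem_unitaryGroup_iff'.mp (Matrix.IsHermitian.eigenvectorUnitary hA).2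
  have hU2 : U * Uᴴ = 1 := by
    rw [← Matrix.star_eq_conjTranspose]
    exact Matrix.mem_unitaryGroup_iff.mp (Matrix.IsHermitian.eigenvectorUnitary hA).2
  set lam : m → ℝ := hA.eigenvalues with hlam_def
  have hspec : A = U * Matrix.diagonal (fun i => (lam i : ℂ)) * Uᴴ := by
    have h := hA.spectral_theorem
    rw [← Matrix.star_eq_conjTranspose]
    rw [Unitary.conjStarAlgAut_apply] at h
    exact h
  set sg : m → ℝ := fun i => if lam i < 0 then -1 else 1 with hsg_def
  set ab : m → ℝ := fun i => |lam i| with hab_def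
  have hsg_sq : ∀ i, sg i * sg i = 1 := by
    intro i
    rw [hsg_def]
    dsimp only
    split_ifs <;> norm_num
  have hsg_abs : ∀ i, sg i * lam i = ab i := by
    intro i
    rw [hsg_def, hab_def]
    dsimp only
    rcases lt_or_ge (lam i) 0 with h | h
    · rw [if_pos h, abs_of_neg h]; ring
    · rw [if_neg (not_lt.mpr h), abs_of_nonneg h]; ring
  set W : Matrix m m ℂ := U * Matrix.diagonal (fun i => (sg i : ℂ)) * Uᴴ with hW_def
  have hW : W.IsHermitian := herm_conj_diag U sg
  have hWW : W * W = 1 := by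
    rw [hW_def, conj_diag_mul U hU1]
    have : (fun i => ((sg i : ℝ) : ℂ) * ((sg i : ℝ) : ℂ)) = fun _ => (1 : ℂ) := by
      funext i
      rw [← Complex.ofReal_mul, hsg_sq i, Complex.ofReal_one]
    rw [this, Matrix.diagonal_one, Matrix.mul_one, hU2]
  have hWA : W * A = U * Matrix.diagonal (fun i => (ab i : ℂ)) * Uᴴ := by
    rw [hW_def, hspec, conj_diag_mul U hU1]
    have hfun : (fun i => ((sg i : ℝ) : ℂ) * ((lam i : ℝ) : ℂ))
        = fun i => ((ab i : ℝ) : ℂ) :=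
      funext fun i => by rw [← Complex.ofReal_mul, hsg_abs i]
    rw [hfun]
  have htrWA : (W * A).trace.re = ∑ i, ab i := by
    rw [hWA, trace_conj_diag U hU1, Complex.re_sum]
    exact Finset.sum_congr rfl fun i _ => Complex.ofReal_re _
  -- traceNorm A = ∑ ab i
  have htn : traceNorm A = ∑ i, ab i := by
    set Q : Matrix m m ℂ := U * Matrix.diagonal (fun i => (ab i : ℂ)) * Uᴴ with hQ_def
    have hQps : Q.PosSemidef := by
      have hdiag : (Matrix.diagonal (fun i => ((ab i : ℝ) : ℂ))).PosSemidef := by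
        rw [Matrix.posSemidef_diagonal_iff]
        intro i
        rw [Complex.zero_le_real]
        exact abs_nonneg _
      have h := hdiag.mul_mul_conjTranspose_same U
      rw [hQ_def, Matrix.mul_assoc]
      rw [Matrix.mul_assoc] at h
      exact h
    have hQsq : Q ^ 2 = Aᴴ * A := by
      rw [hA.eq, sq, hQ_def, conj_diag_mul U hU1, hspec, conj_diag_mul U hU1]
      have hfun : (fun i => ((ab i : ℝ) : ℂ) * ((ab i : ℝ) : ℂ))
          = fun i => ((lam i : ℝ) : ℂ) * ((lam i : ℝ) : ℂ) :=
        funext fun i => by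
          rw [← Complex.ofReal_mul, ← Complex.ofReal_mul, hab_def]
          dsimp only
          rw [abs_mul_abs_self]
      rw [hfun]
    have hB := Matrix.posSemidef_conjTranspose_mul_self A
    have hcfc : hB.1.cfc Real.sqrt = (hB.1.eigenvectorUnitary.1 *
        diagonal (((↑) : ℝ → ℂ) ∘ (√·) ∘ hB.1.eigenvalues) *
        (star hB.1.eigenvectorUnitary : Matrix m m ℂ)) := rfl
    have hAA : Aᴴ * A = cfc (fun x : ℝ => x * x) A := by
      rw [cfc_mul (fun x : ℝ => x) (fun x : ℝ => x) A, cfc_id' ℝ A, hA.eq]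
    rw [traceNorm, ← hcfc, ← hB.1.cfc_eq, hAA, ← cfc_comp' Real.sqrt (fun x : ℝ => x * x) A,
      hA.cfc_eq, Matrix.IsHermitian.cfc, Unitary.conjStarAlgAut_apply, ← hU_def,
      Matrix.star_eq_conjTranspose, trace_conj_diag U hU1, Complex.re_sum]
    refine Finset.sum_congr rfl fun i _ => ?_
    simp [hab_def, hlam_def, Real.sqrt_mul_self_eq_abs]
  -- A = t * B * t where B = s*A*s
  set B : Matrix m m ℂ := s * A * s with hB_def
  have hB : B.IsHermitian := herm_mul3 hs hA
  have hAts : A = t * B * t := by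
    rw [hB_def]
    calc A = (t * s) * A * (s * t) := by
          rw [hts, hst, Matrix.one_mul, Matrix.mul_one]
      _ = t * (s * A * s) * t := by simp only [Matrix.mul_assoc]
  set M : Matrix m m ℂ := t * W * t with hM_def
  have hM : M.IsHermitian := herm_mul3 ht hW
  have htr_eq : (W * A).trace = (M * B).trace := by
    conv_lhs => rw [hAts]
    have h1 : W * (t * B * t) = (W * t * B) * t := by simp only [Matrix.mul_assoc]
    rw [h1, Matrix.trace_mul_comm]
    have h2 : t * (W * t * B) = (t * W * t) * B := by simp only [Matrix.mul_assoc]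
    rw [h2, hM_def]
  -- bound (M*M).trace.re by tr(t⁴)
  set T2 : Matrix m m ℂ := t * t with hT2_def
  have hT2 : T2.IsHermitian := herm_mul_self ht
  have hWT2W : (W * T2 * W).IsHermitian := herm_mul3 hW hT2
  have hMM_trace : (M * M).trace = ((W * T2 * W) * T2).trace := by
    have h1 : M * M = t * (W * (t * (t * (W * t)))) := by
      rw [hM_def]; simp only [Matrix.mul_assoc]
    rw [h1, Matrix.trace_mul_comm]
    rw [hT2_def]
    simp only [Matrix.mul_assoc]
  have hWT2W_sq : (W * T2 * W) * (W * T2 * W) = W * (T2 * T2) * W := by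
    calc (W * T2 * W) * (W * T2 * W) = W * T2 * (W * W) * T2 * W := by
          simp only [Matrix.mul_assoc]
      _ = W * (T2 * T2) * W := by
          rw [hWW]
          simp only [Matrix.mul_one, Matrix.one_mul, Matrix.mul_assoc]
  have htrWT2W_sq : ((W * T2 * W) * (W * T2 * W)).trace = (T2 * T2).trace := by
    rw [hWT2W_sq, Matrix.mul_assoc, Matrix.trace_mul_comm, Matrix.mul_assoc, hWW,
      Matrix.mul_one]
  have ha_nonneg : 0 ≤ (T2 * T2).trace.re := trace_sq_re_nonneg T2 hT2
  have hMM_le : (M * M).trace.re ≤ (T2 * T2).trace.re := by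
    rw [hMM_trace]
    calc ((W * T2 * W) * T2).trace.re
        ≤ Real.sqrt (((W * T2 * W) * (W * T2 * W)).trace.re) *
            Real.sqrt ((T2 * T2).trace.re) := trace_cs _ _ hWT2W hT2
      _ = (T2 * T2).trace.re := by
          rw [htrWT2W_sq, Real.mul_self_sqrt ha_nonneg]
  -- identify T2 * T2 with (s^4)⁻¹
  have hT4 : (s ^ 4)⁻¹ = T2 * T2 := by
    apply Matrix.inv_eq_right_inv
    have collapse : ∀ Mx : Matrix m m ℂ, s * (t * Mx) = Mx := fun Mx => by
      rw [← Matrix.mul_assoc, hst, Matrix.one_mul]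
    calc s ^ 4 * (T2 * T2) = s * (s * (s * (s * (t * (t * (t * t)))))) := by
          rw [hT2_def]
          simp only [pow_succ, pow_zero, Matrix.one_mul, Matrix.mul_assoc]
      _ = 1 := by rw [collapse, collapse, collapse, hst]
  -- conclude
  have hfinal1 : traceNorm A = (M * B).trace.re := by
    rw [htn, ← htrWA, htr_eq]
  have hBB : ((s * A * s) ^ 2).trace.re = (B * B).trace.re := by rw [sq, hB_def]
  rw [hfinal1, hT4, hBB]
  calc (M * B).trace.re
      ≤ Real.sqrt ((M * M).trace.re) * Real.sqrt ((B * B).trace.re) :=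
        trace_cs M B hM hB
    _ ≤ Real.sqrt ((T2 * T2).trace.re) * Real.sqrt ((B * B).trace.re) :=
        mul_le_mul_of_nonneg_right (Real.sqrt_le_sqrt hMM_le) (Real.sqrt_nonneg _)

end Aux


section App
set_option linter.unusedSectionVars false
variable {X : Type*} [Fintype X] [DecidableEq X] {d : ℕ}

lemma kron_conjTranspose (A : Matrix X X ℂ) (B : Matrix (Fin d) (Fin d) ℂ) :
    (A ⊗ₖ B)ᴴ = Aᴴ ⊗ₖ Bᴴ := by
  ext ⟨i, j⟩ ⟨k, l⟩
  simp [Matrix.conjTranspose_apply, Matrix.kroneckerMap_apply, star_mul']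

lemma stdBasis_herm (x : X) :
    (Matrix.single x x (1 : ℂ))ᴴ = Matrix.single x x 1 := by
  ext i j
  simp [Matrix.single_apply, Matrix.conjTranspose_apply, apply_ite, and_comm]

lemma kron_one_pow (M : Matrix (Fin d) (Fin d) ℂ) (k : ℕ) :
    ((1 : Matrix X X ℂ) ⊗ₖ M) ^ k = (1 : Matrix X X ℂ) ⊗ₖ (M ^ k) := by
  induction k with
  | zero => simp [Matrix.one_kronecker_one]
  | succ k ih =>
      rw [pow_succ, ih, ← Matrix.mul_kronecker_mul, Matrix.one_mul, ← pow_succ]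

end App

/-- `d(ρ_XB|B) ≤ sqrt(dim H_X) · sqrt(d₂(ρ_XB|σ_B))` for classical-on-X states,
where `σ_B = (σq^4)⁻¹` is normalized and invertible (with inverse fourth root `σq`). -/
theorem l1_le_sqrt_dim_mul_sqrt_l2 {X : Type*} [Fintype X] [DecidableEq X] {d : ℕ}
    (P : X → ℝ) (hP0 : ∀ x, 0 ≤ P x) (hP1 : ∑ x, P x = 1)
    (ρB : X → Matrix (Fin d) (Fin d) ℂ)
    (hρ : ∀ x, (ρB x).PosSemidef) (hρtr : ∀ x, (ρB x).trace = 1)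
    (σq : Matrix (Fin d) (Fin d) ℂ) (hσ : σq.PosDef)
    (hσtr : ((σq ^ 4)⁻¹).trace = 1) :
    traceNorm
        ((∑ x, Matrix.single x x (1 : ℂ) ⊗ₖ ((P x : ℂ) • ρB x))
          - (Fintype.card X : ℂ)⁻¹ •
              ((1 : Matrix X X ℂ) ⊗ₖ (∑ x, (P x : ℂ) • ρB x)))
      ≤ Real.sqrt (Fintype.card X) *
        Real.sqrt
          (((((1 : Matrix X X ℂ) ⊗ₖ σq) *
              ((∑ x, Matrix.single x x (1 : ℂ) ⊗ₖ ((P x : ℂ) • ρB x))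
                - (Fintype.card X : ℂ)⁻¹ •
                    ((1 : Matrix X X ℂ) ⊗ₖ (∑ x, (P x : ℂ) • ρB x))) *
              ((1 : Matrix X X ℂ) ⊗ₖ σq)) ^ 2).trace.re) := by
  classical
  set R : Matrix (Fin d) (Fin d) ℂ := ∑ x, (P x : ℂ) • ρB x with hR_def
  set Δ : Matrix (X × Fin d) (X × Fin d) ℂ :=
    (∑ x, Matrix.single x x (1 : ℂ) ⊗ₖ ((P x : ℂ) • ρB x))
      - (Fintype.card X : ℂ)⁻¹ • ((1 : Matrix X X ℂ) ⊗ₖ R) with hΔ_def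
  set s : Matrix (X × Fin d) (X × Fin d) ℂ := (1 : Matrix X X ℂ) ⊗ₖ σq with hs_def
  have hR : R.IsHermitian := by
    rw [hR_def, Matrix.IsHermitian, Matrix.conjTranspose_sum]
    refine Finset.sum_congr rfl fun x _ => ?_
    rw [Matrix.conjTranspose_smul, (hρ x).1.eq, Complex.star_def, Complex.conj_ofReal]
  have hΔ : Δ.IsHermitian := by
    rw [hΔ_def]
    apply Matrix.IsHermitian.sub
    · rw [Matrix.IsHermitian, Matrix.conjTranspose_sum]
      refine Finset.sum_congr rfl fun x _ => ?_
      rw [kron_conjTranspose, stdBasis_herm, Matrix.conjTranspose_smul, (hρ x).1.eq,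
        Complex.star_def, Complex.conj_ofReal]
    · rw [Matrix.IsHermitian, Matrix.conjTranspose_smul, kron_conjTranspose,
        Matrix.conjTranspose_one, hR.eq]
      congr 1
      simp
  have hs : s.IsHermitian := by
    rw [hs_def, Matrix.IsHermitian, kron_conjTranspose, Matrix.conjTranspose_one,
      hσ.isHermitian.eq]
  have hdet : IsUnit s.det := by
    rw [hs_def, Matrix.det_kronecker, Matrix.det_one, one_pow, one_mul]
    exact (isUnit_iff_ne_zero.mpr hσ.det_pos.ne').pow _
  have htrace : ((s ^ 4)⁻¹).trace.re = (Fintype.card X : ℝ) := by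
    have hinv1 : (1 : Matrix X X ℂ)⁻¹ = 1 := Matrix.inv_eq_right_inv (Matrix.one_mul 1)
    rw [hs_def, kron_one_pow, Matrix.inv_kronecker, hinv1,
      Matrix.trace_kronecker, Matrix.trace_one, hσtr, mul_one, Complex.natCast_re]
  have h := key_lemma Δ s hΔ hs hdet
  rw [← htrace]
  exact h
end

section
/- Let ρ_{XB} = Σ_x P_X(x)|x⟩⟨x| ⊗ ρ_B^x be classical on H_X with X ∈ 𝒳 and normalized conditional operators ρ_B^x. Then for any invertible σ_B: d_2(ρ_{XB}|σ_B) = Σ_x tr((σ_B^{-1/4} P_X(x) ρ_B^x σ_B^{-1/4})^2) - (1/|𝒳|) tr((σ_B^{-1/4} ρ_B σ_B^{-1/4})^2). -/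
open Matrix BigOperators Finset
open scoped Kronecker ComplexOrder

/-- Explicit formula for the conditional L₂-distance from uniform:
`d₂(ρ_XB|σ_B) = Σ_x tr((σ_B^{-1/4} P_X(x) ρ_B^x σ_B^{-1/4})²) - (1/|X|) tr((σ_B^{-1/4} ρ_B σ_B^{-1/4})²)`,
where `σq = σ_B^{-1/4}` (any invertible `σ_B`, i.e. `σq` positive definite). -/
theorem l2_dist_explicit {X : Type*} [Fintype X] [DecidableEq X] {d : ℕ}
    (P : X → ℝ) (hP0 : ∀ x, 0 ≤ P x) (hP1 : ∑ x, P x = 1)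
    (ρB : X → Matrix (Fin d) (Fin d) ℂ)
    (hρ : ∀ x, (ρB x).PosSemidef) (hρtr : ∀ x, (ρB x).trace = 1)
    (σq : Matrix (Fin d) (Fin d) ℂ) (hσ : σq.PosDef) :
    ((((1 : Matrix X X ℂ) ⊗ₖ σq) *
        ((∑ x, Matrix.single x x (1 : ℂ) ⊗ₖ ((P x : ℂ) • ρB x))
          - (Fintype.card X : ℂ)⁻¹ •
              ((1 : Matrix X X ℂ) ⊗ₖ (∑ x, (P x : ℂ) • ρB x))) *
        ((1 : Matrix X X ℂ) ⊗ₖ σq)) ^ 2).trace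
      = (∑ x, ((σq * ((P x : ℂ) • ρB x) * σq) ^ 2).trace)
        - (Fintype.card X : ℂ)⁻¹ * ((σq * (∑ x, (P x : ℂ) • ρB x) * σq) ^ 2).trace := by
  classical
  have hne : Nonempty X := by
    by_contra h
    rw [not_nonempty_iff] at h
    simp at hP1
  have hcard : (Fintype.card X : ℂ) ≠ 0 := by
    exact_mod_cast Nat.cast_ne_zero.mpr Fintype.card_ne_zero
  set c : ℂ := (Fintype.card X : ℂ)⁻¹ with hc
  set A : X → Matrix (Fin d) (Fin d) ℂ := fun x => σq * ((P x : ℂ) • ρB x) * σq with hA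
  set S : Matrix (Fin d) (Fin d) ℂ := σq * (∑ x, (P x : ℂ) • ρB x) * σq with hS
  have hSsum : S = ∑ x, A x := by
    simp only [hS, hA, Finset.mul_sum, Finset.sum_mul]
  set D : Matrix (X × Fin d) (X × Fin d) ℂ :=
    ∑ x, Matrix.single x x (1 : ℂ) ⊗ₖ A x with hD
  set K : Matrix (X × Fin d) (X × Fin d) ℂ := (1 : Matrix X X ℂ) ⊗ₖ S with hK
  have key : ∀ (E : Matrix X X ℂ) (B : Matrix (Fin d) (Fin d) ℂ),
      ((1 : Matrix X X ℂ) ⊗ₖ σq) * (E ⊗ₖ B) * ((1 : Matrix X X ℂ) ⊗ₖ σq)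
        = E ⊗ₖ (σq * B * σq) := by
    intro E B
    rw [← Matrix.mul_kronecker_mul, ← Matrix.mul_kronecker_mul, one_mul, mul_one]
  have hM : (((1 : Matrix X X ℂ) ⊗ₖ σq) *
        ((∑ x, Matrix.single x x (1 : ℂ) ⊗ₖ ((P x : ℂ) • ρB x))
          - (Fintype.card X : ℂ)⁻¹ •
              ((1 : Matrix X X ℂ) ⊗ₖ (∑ x, (P x : ℂ) • ρB x))) *
        ((1 : Matrix X X ℂ) ⊗ₖ σq)) = D - c • K := by
    rw [mul_sub, sub_mul]
    congr 1
    · rw [Finset.mul_sum, Finset.sum_mul]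
      exact Finset.sum_congr rfl fun x _ => key _ _
    · rw [Algebra.mul_smul_comm, smul_mul_assoc, key]
  rw [hM, sq]
  have tDD : (D * D).trace = ∑ x, ((A x) * (A x)).trace := by
    rw [hD, Finset.sum_mul_sum, Matrix.trace_sum]
    simp only [Matrix.trace_sum]
    refine Finset.sum_congr rfl fun x _ => ?_
    rw [Finset.sum_eq_single x]
    · rw [← Matrix.mul_kronecker_mul, Matrix.single_mul_single_same,
        Matrix.trace_kronecker]
      simp [Matrix.trace, Matrix.diag, Matrix.single]
    · intro y _ hy
      rw [← Matrix.mul_kronecker_mul,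
        Matrix.single_mul_single_of_ne (h := Ne.symm hy), Matrix.zero_kronecker,
        Matrix.trace_zero]
    · intro h; exact absurd (Finset.mem_univ x) h
  have trE : ∀ x : X, (Matrix.single x x (1 : ℂ)).trace = 1 := by
    intro x
    simp [Matrix.trace, Matrix.diag, Matrix.single]
  have tDK : (D * K).trace = (S * S).trace := by
    rw [hD, hK, Finset.sum_mul, Matrix.trace_sum]
    have : ∀ x : X, (Matrix.single x x (1 : ℂ) ⊗ₖ A x *
        ((1 : Matrix X X ℂ) ⊗ₖ S)).trace = (A x * S).trace := by
      intro x
      rw [← Matrix.mul_kronecker_mul, mul_one, Matrix.trace_kronecker, trE, one_mul]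
    simp only [this]
    rw [← Matrix.trace_sum, ← Finset.sum_mul, ← hSsum]
  have tKD : (K * D).trace = (S * S).trace := by
    rw [Matrix.trace_mul_comm]; exact tDK
  have tKK : (K * K).trace = (Fintype.card X : ℂ) * (S * S).trace := by
    rw [hK, ← Matrix.mul_kronecker_mul, Matrix.trace_kronecker, one_mul,
      Matrix.trace_one]
  have expand : ((D - c • K) * (D - c • K)).trace
      = (D * D).trace - c * (D * K).trace - c * (K * D).trace + c * c * (K * K).trace := by
    rw [sub_mul, mul_sub, mul_sub, smul_mul_assoc, Algebra.mul_smul_comm,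
      smul_mul_assoc, Algebra.mul_smul_comm]
    simp only [Matrix.trace_sub, Matrix.trace_smul, smul_eq_mul]
    ring
  rw [expand, tDD, tDK, tKD, tKK]
  have hRA : ∀ x : X, ((σq * ((P x : ℂ) • ρB x) * σq) ^ 2).trace = (A x * A x).trace := by
    intro x; rw [sq, hA]
  have hRS : ((σq * (∑ x, (P x : ℂ) • ρB x) * σq) ^ 2).trace = (S * S).trace := by
    rw [sq, hS]
  simp only [hRA, hRS]
  have hcc : c * c * ((Fintype.card X : ℂ) * (S * S).trace) = c * (S * S).trace := by
    rw [hc]; field_simp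
  rw [hcc, sq]; ring
end

section
/- Let ρ_{XB} be classical on H_X with X ∈ {0,1}^n, {A_i} a δ-biased family over {0,1}^n, I uniform and independent, D_i = A_i ⊕ X. Then for any normalized invertible σ_B: E_{i←I}[d_2(ρ_{D_i B}|σ_B)] ≤ δ^2 · 2^{-H_2(ρ_{XB}|σ_B)}. -/
open Matrix BigOperators Finset
open scoped Kronecker ComplexOrder

/-- Bias of a distribution `P` on bit strings with respect to `α`. -/
noncomputable def bias {n : ℕ} (α : BS n) (P : BS n → ℝ) : ℝ := ∑ a, P a * sgn α a


noncomputable def chi (a : ZMod 2) : ℝ := if a = 0 then 1 else -1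

lemma chi_add (a b : ZMod 2) : chi (a + b) = chi a * chi b := by
  have h : ∀ a b : ZMod 2, (a + b = 0 ↔ (a = 0 ↔ b = 0)) := by decide
  unfold chi
  simp only [h a b]
  by_cases ha : a = 0 <;> by_cases hb : b = 0 <;> simp [ha, hb]

lemma chi_sum {ι : Type*} (s : Finset ι) (c : ι → ZMod 2) :
    chi (∑ i ∈ s, c i) = ∏ i ∈ s, chi (c i) := by
  induction s using Finset.cons_induction with
  | empty => simp [chi]
  | cons a s ha ih => rw [Finset.sum_cons, Finset.prod_cons, chi_add, ih]

lemma sgn_eq_chi {n : ℕ} (α x : BS n) : sgn α x = chi (∑ i, α i * x i) := rfl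

lemma sgn_comm {n : ℕ} (α x : BS n) : sgn α x = sgn x α := by
  unfold sgn; simp_rw [mul_comm]

lemma sgn_add_right {n : ℕ} (α x y : BS n) : sgn α (x + y) = sgn α x * sgn α y := by
  rw [sgn_eq_chi, sgn_eq_chi, sgn_eq_chi, ← chi_add]
  congr 1
  rw [← Finset.sum_add_distrib]
  exact Finset.sum_congr rfl fun i _ => by simp [mul_add]

lemma sgn_add_left {n : ℕ} (α β x : BS n) : sgn (α + β) x = sgn α x * sgn β x := by
  rw [sgn_comm, sgn_add_right, sgn_comm x α, sgn_comm x β]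

lemma sgn_zero_left {n : ℕ} (x : BS n) : sgn 0 x = 1 := by
  unfold sgn
  simp

lemma sum_chi_mul (z : ZMod 2) : ∑ a : ZMod 2, chi (a * z) = if z = 0 then 2 else 0 := by
  have : (univ : Finset (ZMod 2)) = {0, 1} := by decide
  rw [this, Finset.sum_insert (by decide), Finset.sum_singleton]
  by_cases hz : z = 0
  · subst hz; simp [chi]; norm_num
  · have hz1 : z = 1 := by revert hz; revert z; decide
    subst hz1; simp [chi]

lemma sum_sgn {n : ℕ} (z : BS n) :
    ∑ α : BS n, sgn α z = if z = 0 then (2:ℝ)^n else 0 := by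
  have h1 : ∀ α : BS n, sgn α z = ∏ i, chi (α i * z i) := fun α => by
    rw [sgn_eq_chi, chi_sum]
  simp_rw [h1]
  have h2 : ∑ x : BS n, ∏ i, chi (x i * z i) = ∏ i, ∑ a : ZMod 2, chi (a * z i) := by
    rw [Finset.prod_univ_sum (fun _ => (univ : Finset (ZMod 2))) (fun i a => chi (a * z i)),
      Fintype.piFinset_univ]
  rw [h2]
  simp_rw [sum_chi_mul]
  by_cases hz : z = 0
  · subst hz; simp
  · rw [if_neg hz]
    obtain ⟨j, hj⟩ : ∃ j, z j ≠ 0 := by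
      by_contra h; push_neg at h; exact hz (funext h)
    rw [Finset.prod_eq_zero (Finset.mem_univ j) (by rw [if_neg hj])]

lemma sum_sgn_snd {n : ℕ} (γ : BS n) :
    ∑ x : BS n, sgn γ x = if γ = 0 then (2:ℝ)^n else 0 := by
  simp_rw [sgn_comm γ]; exact sum_sgn γ

lemma bs_add_eq_zero {n : ℕ} (x y : BS n) : x + y = 0 ↔ x = y := by
  constructor
  · intro h; funext i
    exact (show ∀ a b : ZMod 2, a + b = 0 → a = b by decide) (x i) (y i) (congrFun h i)
  · rintro rfl; funext i
    exact (show ∀ a : ZMod 2, a + a = 0 by decide) (x i)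

lemma bias_zero {n : ℕ} (P : BS n → ℝ) (h1 : ∑ a, P a = 1) : bias 0 P = 1 := by
  unfold bias; simp_rw [sgn_zero_left, mul_one]; exact h1

lemma fourier_inv {n : ℕ} (P : BS n → ℝ) (h1 : ∑ a, P a = 1) (u : BS n) :
    P u - ((2:ℝ)^n)⁻¹ =
      ((2:ℝ)^n)⁻¹ * ∑ α ∈ univ.erase 0, bias α P * sgn α u := by
  have key : ∑ α : BS n, bias α P * sgn α u = (2:ℝ)^n * P u := by
    unfold bias
    simp_rw [Finset.sum_mul]
    rw [Finset.sum_comm]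
    have h2 : ∀ a : BS n, ∑ α : BS n, P a * sgn α a * sgn α u
        = P a * (if a = u then (2:ℝ)^n else 0) := by
      intro a
      simp_rw [mul_assoc, ← Finset.mul_sum, ← sgn_add_right]
      rw [sum_sgn (a+u)]
      simp [bs_add_eq_zero]
    simp_rw [h2, mul_ite, mul_zero]
    rw [Finset.sum_ite_eq' univ u (fun a => P a * (2:ℝ)^n)]
    simp [mul_comm]
  have hsplit : bias 0 P * sgn 0 u + ∑ α ∈ univ.erase 0, bias α P * sgn α u
      = ∑ α : BS n, bias α P * sgn α u := by
    exact Finset.add_sum_erase _ (fun α => bias α P * sgn α u) (Finset.mem_univ 0)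
  rw [bias_zero P h1, sgn_zero_left, one_mul] at hsplit
  have h2n : ((2:ℝ)^n) ≠ 0 := by positivity
  have : ∑ α ∈ univ.erase 0, bias α P * sgn α u = (2:ℝ)^n * P u - 1 := by
    rw [← key, ← hsplit]; ring
  rw [this]
  field_simp

lemma corr {n : ℕ} (P : BS n → ℝ) (h1 : ∑ a, P a = 1) (x y : BS n) :
    ∑ dd : BS n, (P (dd+x) - ((2:ℝ)^n)⁻¹) * (P (dd+y) - ((2:ℝ)^n)⁻¹)
      = ((2:ℝ)^n)⁻¹ * ∑ α ∈ (univ : Finset (BS n)).erase 0,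
          (bias α P)^2 * (sgn α x * sgn α y) := by
  have h2n : ((2:ℝ)^n) ≠ 0 := by positivity
  set E := (univ : Finset (BS n)).erase 0 with hE
  set c := ((2:ℝ)^n)⁻¹ with hc
  have inner : ∀ α β : BS n, ∑ dd : BS n, sgn α (dd+x) * sgn β (dd+y)
      = sgn α x * sgn β y * (if α = β then (2:ℝ)^n else 0) := by
    intro α β
    have h3 : ∀ dd, sgn α (dd+x) * sgn β (dd+y) = (sgn α x * sgn β y) * sgn (α+β) dd := by
      intro dd; rw [sgn_add_right, sgn_add_right, sgn_add_left]; ring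
    simp_rw [h3, ← Finset.mul_sum]
    rw [sum_sgn_snd]
    congr 1
    simp [bs_add_eq_zero]
  have lhs_eq : ∑ dd : BS n, (P (dd+x) - c) * (P (dd+y) - c)
      = ∑ α ∈ E, ∑ β ∈ E, (c*c) * (bias α P * bias β P) *
          (sgn α x * sgn β y * (if α = β then (2:ℝ)^n else 0)) := by
    calc ∑ dd : BS n, (P (dd+x) - c) * (P (dd+y) - c)
        = ∑ dd : BS n, ∑ α ∈ E, ∑ β ∈ E,
            (c*c) * (bias α P * bias β P) * (sgn α (dd+x) * sgn β (dd+y)) := by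
          refine Finset.sum_congr rfl fun dd _ => ?_
          rw [fourier_inv P h1 (dd+x), fourier_inv P h1 (dd+y), mul_mul_mul_comm,
            Finset.sum_mul_sum, Finset.mul_sum]
          refine Finset.sum_congr rfl fun α _ => ?_
          rw [Finset.mul_sum]
          refine Finset.sum_congr rfl fun β _ => ?_
          ring
      _ = ∑ α ∈ E, ∑ dd : BS n, ∑ β ∈ E,
            (c*c) * (bias α P * bias β P) * (sgn α (dd+x) * sgn β (dd+y)) :=
          Finset.sum_comm
      _ = ∑ α ∈ E, ∑ β ∈ E, ∑ dd : BS n,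
            (c*c) * (bias α P * bias β P) * (sgn α (dd+x) * sgn β (dd+y)) :=
          Finset.sum_congr rfl fun α _ => Finset.sum_comm
      _ = ∑ α ∈ E, ∑ β ∈ E, (c*c) * (bias α P * bias β P) *
            (sgn α x * sgn β y * (if α = β then (2:ℝ)^n else 0)) := by
          refine Finset.sum_congr rfl fun α _ => Finset.sum_congr rfl fun β _ => ?_
          rw [← Finset.mul_sum, inner α β]
  rw [lhs_eq, Finset.mul_sum]
  refine Finset.sum_congr rfl fun α hα => ?_
  rw [Finset.sum_eq_single_of_mem α hα]
  · rw [if_pos rfl, hc]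
    field_simp
  · intro β _ hβ
    rw [if_neg (fun h => hβ h.symm)]
    ring

lemma sum_rotate {A B C : Type*} {s : Finset A} {t : Finset B} {u : Finset C}
    (f : A → B → C → ℝ) :
    ∑ x ∈ s, ∑ y ∈ t, ∑ α ∈ u, f x y α = ∑ α ∈ u, ∑ x ∈ s, ∑ y ∈ t, f x y α :=
  calc ∑ x ∈ s, ∑ y ∈ t, ∑ α ∈ u, f x y α
      = ∑ x ∈ s, ∑ α ∈ u, ∑ y ∈ t, f x y α :=
        Finset.sum_congr rfl fun x _ => Finset.sum_comm
    _ = ∑ α ∈ u, ∑ x ∈ s, ∑ y ∈ t, f x y α := Finset.sum_comm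

lemma juggle {n : ℕ} (PX P : BS n → ℝ) (hP1 : ∑ a, P a = 1) (R : BS n → BS n → ℝ) :
    ∑ dd : BS n, ∑ x, ∑ y, (PX x * (P (dd+x) - ((2:ℝ)^n)⁻¹)) *
        (PX y * (P (dd+y) - ((2:ℝ)^n)⁻¹)) * R x y
      = ((2:ℝ)^n)⁻¹ * ∑ α ∈ (univ : Finset (BS n)).erase 0, (bias α P)^2 *
          (∑ x, ∑ y, (PX x * sgn α x) * (PX y * sgn α y) * R x y) := by
  calc ∑ dd : BS n, ∑ x, ∑ y, (PX x * (P (dd+x) - ((2:ℝ)^n)⁻¹)) *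
        (PX y * (P (dd+y) - ((2:ℝ)^n)⁻¹)) * R x y
      = ∑ x : BS n, ∑ y, (PX x * PX y * R x y) *
          ∑ dd : BS n, (P (dd+x) - ((2:ℝ)^n)⁻¹) * (P (dd+y) - ((2:ℝ)^n)⁻¹) := by
        rw [Finset.sum_comm]
        refine Finset.sum_congr rfl fun x _ => ?_
        rw [Finset.sum_comm]
        refine Finset.sum_congr rfl fun y _ => ?_
        rw [Finset.mul_sum]
        refine Finset.sum_congr rfl fun dd _ => ?_
        ring
    _ = ∑ x : BS n, ∑ y, (PX x * PX y * R x y) *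
          (((2:ℝ)^n)⁻¹ * ∑ α ∈ (univ : Finset (BS n)).erase 0,
            (bias α P)^2 * (sgn α x * sgn α y)) := by
        refine Finset.sum_congr rfl fun x _ => Finset.sum_congr rfl fun y _ => ?_
        rw [corr P hP1 x y]
    _ = ((2:ℝ)^n)⁻¹ * ∑ α ∈ (univ : Finset (BS n)).erase 0, (bias α P)^2 *
          (∑ x, ∑ y, (PX x * sgn α x) * (PX y * sgn α y) * R x y) := by
        simp only [Finset.mul_sum]
        rw [sum_rotate]
        refine Finset.sum_congr rfl fun α _ => Finset.sum_congr rfl fun x _ =>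
          Finset.sum_congr rfl fun y _ => ?_
        ring

lemma parseval {n : ℕ} (PX : BS n → ℝ) (R : BS n → BS n → ℝ) :
    ∑ α : BS n, ∑ x, ∑ y, (PX x * sgn α x) * (PX y * sgn α y) * R x y
      = (2:ℝ)^n * ∑ x, (PX x)^2 * R x x := by
  have step1 : ∀ x y : BS n, ∑ α : BS n, (PX x * sgn α x) * (PX y * sgn α y) * R x y
      = (PX x * PX y * R x y) * (if x = y then (2:ℝ)^n else 0) := by
    intro x y
    have h1 : ∀ α : BS n, (PX x * sgn α x) * (PX y * sgn α y) * R x y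
        = (PX x * PX y * R x y) * sgn α (x + y) := by
      intro α; rw [sgn_add_right]; ring
    simp_rw [h1, ← Finset.mul_sum, sum_sgn]
    congr 1
    simp [bs_add_eq_zero]
  calc ∑ α : BS n, ∑ x, ∑ y, (PX x * sgn α x) * (PX y * sgn α y) * R x y
      = ∑ x : BS n, ∑ y, ∑ α : BS n, (PX x * sgn α x) * (PX y * sgn α y) * R x y :=
        (sum_rotate _).symm
    _ = ∑ x : BS n, ∑ y, (PX x * PX y * R x y) * (if x = y then (2:ℝ)^n else 0) := by
        refine Finset.sum_congr rfl fun x _ => Finset.sum_congr rfl fun y _ => step1 x y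
    _ = (2:ℝ)^n * ∑ x, (PX x)^2 * R x x := by
        rw [Finset.mul_sum]
        refine Finset.sum_congr rfl fun x _ => ?_
        simp_rw [mul_ite, mul_zero, Finset.sum_ite_eq]
        simp
        ring

lemma sum_kron {ι l p : Type*} [DecidableEq l] (s : Finset ι)
    (A : ι → Matrix l l ℂ) (B : Matrix p p ℂ) :
    (∑ i ∈ s, A i) ⊗ₖ B = ∑ i ∈ s, (A i) ⊗ₖ B := by
  ext ⟨a, b⟩ ⟨c, e⟩
  simp [Matrix.kroneckerMap_apply, Matrix.sum_apply, Finset.sum_mul]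

lemma kron_sub {l p : Type*} (A : Matrix l l ℂ) (B C : Matrix p p ℂ) :
    A ⊗ₖ (B - C) = A ⊗ₖ B - A ⊗ₖ C := by
  ext ⟨a, b⟩ ⟨c, e⟩
  simp [Matrix.kroneckerMap_apply, Matrix.sub_apply, mul_sub]

lemma one_eq_sum_std {κ : Type*} [Fintype κ] [DecidableEq κ] :
    (1 : Matrix κ κ ℂ) = ∑ dd : κ, single dd dd (1:ℂ) := by
  ext a b
  rw [Matrix.sum_apply]
  simp only [Matrix.single, Matrix.of_apply]
  by_cases hab : a = b
  · subst hab
    rw [Matrix.one_apply_eq]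
    simp [and_self, Finset.sum_ite_eq']
  · rw [Matrix.one_apply_ne hab]
    symm
    apply Finset.sum_eq_zero
    intro dd _
    rw [if_neg]
    rintro ⟨rfl, rfl⟩
    exact hab rfl

lemma trace_std {κ : Type*} [Fintype κ] [DecidableEq κ] (dd : κ) :
    (single dd dd (1:ℂ)).trace = 1 := by
  rw [Matrix.trace]
  simp [Matrix.diag, Matrix.single, Finset.sum_ite_eq]

lemma block_trace {n d : ℕ} (σ : Matrix (Fin d) (Fin d) ℂ)
    (h : BS n → Matrix (Fin d) (Fin d) ℂ) :
    ((((1 : Matrix (BS n) (BS n) ℂ) ⊗ₖ σ) *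
        (∑ dd : BS n, single dd dd (1:ℂ) ⊗ₖ h dd) *
        ((1 : Matrix (BS n) (BS n) ℂ) ⊗ₖ σ)) ^ 2).trace
      = ∑ dd : BS n, ((σ * h dd * σ) ^ 2).trace := by
  have key : ((1 : Matrix (BS n) (BS n) ℂ) ⊗ₖ σ) *
      (∑ dd : BS n, single dd dd (1:ℂ) ⊗ₖ h dd) *
      ((1 : Matrix (BS n) (BS n) ℂ) ⊗ₖ σ)
      = ∑ dd : BS n, single dd dd (1:ℂ) ⊗ₖ (σ * h dd * σ) := by
    rw [Matrix.mul_sum, Matrix.sum_mul]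
    refine Finset.sum_congr rfl fun dd _ => ?_
    rw [← Matrix.mul_kronecker_mul, ← Matrix.mul_kronecker_mul, one_mul, mul_one]
  rw [key, pow_two, Matrix.sum_mul]
  simp_rw [Matrix.mul_sum, ← Matrix.mul_kronecker_mul]
  rw [Matrix.trace_sum]
  refine Finset.sum_congr rfl fun dd _ => ?_
  rw [Matrix.trace_sum, Finset.sum_eq_single dd]
  · rw [Matrix.single_mul_single_same 1 dd dd dd 1, one_mul, Matrix.trace_kronecker,
      trace_std, one_mul, pow_two]
  · intro ee _ hee
    rw [Matrix.single_mul_single_of_ne 1 dd dd ee (Ne.symm hee) 1, Matrix.zero_kronecker,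
      Matrix.trace_zero]
  · intro h; exact absurd (Finset.mem_univ dd) h

lemma Tbilin {d : ℕ} {κ : Type*} [Fintype κ] (σ : Matrix (Fin d) (Fin d) ℂ)
    (c e : κ → ℂ) (ρ τ : κ → Matrix (Fin d) (Fin d) ℂ) :
    ((σ * (∑ x, c x • ρ x) * σ) * (σ * (∑ y, e y • τ y) * σ)).trace
      = ∑ x, ∑ y, c x * e y * ((σ * ρ x * σ) * (σ * τ y * σ)).trace := by
  simp only [Matrix.mul_sum, Matrix.sum_mul, Matrix.mul_smul, Matrix.smul_mul,
    Matrix.trace_sum, Matrix.trace_smul, smul_eq_mul, Finset.mul_sum, Finset.sum_mul]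
  rw [Finset.sum_comm]
  refine Finset.sum_congr rfl fun x _ => Finset.sum_congr rfl fun y _ => ?_
  ring

lemma trace_sq_re_nonneg_s15 {d : ℕ} (H : Matrix (Fin d) (Fin d) ℂ) (hH : H.IsHermitian) :
    0 ≤ ((H * H).trace).re := by
  have h1 : (H * H).trace = ∑ j, ∑ k, H j k * star (H j k) := by
    rw [Matrix.trace]
    simp only [Matrix.diag, Matrix.mul_apply]
    refine Finset.sum_congr rfl fun j _ => Finset.sum_congr rfl fun k _ => ?_
    rw [hH.apply k j]
  rw [h1]
  simp_rw [Complex.star_def, Complex.mul_conj, Complex.re_sum, Complex.ofReal_re]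
  apply Finset.sum_nonneg
  intro j _
  apply Finset.sum_nonneg
  intro k _
  exact Complex.normSq_nonneg _

lemma herm_comb {d : ℕ} {κ : Type*} [Fintype κ] (r : κ → ℝ)
    (ρ : κ → Matrix (Fin d) (Fin d) ℂ) (hρ : ∀ x, (ρ x).IsHermitian) :
    (∑ x, ((r x : ℝ) : ℂ) • ρ x).IsHermitian := by
  unfold Matrix.IsHermitian
  rw [Matrix.conjTranspose_sum]
  refine Finset.sum_congr rfl fun x _ => ?_
  rw [Matrix.conjTranspose_smul, (hρ x).eq]
  congr 1
  simp [Complex.conj_ofReal]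

lemma herm_conj3 {d : ℕ} (σ A : Matrix (Fin d) (Fin d) ℂ)
    (hσ : σ.IsHermitian) (hA : A.IsHermitian) : (σ * A * σ).IsHermitian := by
  unfold Matrix.IsHermitian
  rw [Matrix.conjTranspose_mul, Matrix.conjTranspose_mul, hσ.eq, hA.eq, mul_assoc]

/-- Expected conditional L₂-distance bound: for a `δ`-biased family `{A_i}` and
`D_i = A_i ⊕ X`, `E_i[d₂(ρ_{D_i B}|σ_B)] ≤ δ² · 2^{-H₂(ρ_XB|σ_B)}`. -/
theorem expected_l2_dist_le {n d : ℕ} {ι : Type*} [Fintype ι] [Nonempty ι]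
    (PX : BS n → ℝ) (hPX0 : ∀ x, 0 ≤ PX x) (hPX1 : ∑ x, PX x = 1)
    (ρB : BS n → Matrix (Fin d) (Fin d) ℂ)
    (hρ : ∀ x, (ρB x).PosSemidef) (hρtr : ∀ x, (ρB x).trace = 1)
    (PA : ι → BS n → ℝ) (hPA0 : ∀ i a, 0 ≤ PA i a) (hPA1 : ∀ i, ∑ a, PA i a = 1)
    (δ : ℝ)
    (hbias : ∀ α : BS n, α ≠ 0 →
      Real.sqrt ((Fintype.card ι : ℝ)⁻¹ * ∑ i, (bias α (PA i)) ^ 2) ≤ δ)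
    (σq : Matrix (Fin d) (Fin d) ℂ) (hσ : σq.PosDef)
    (hσtr : ((σq ^ 4)⁻¹).trace = 1) :
    (Fintype.card ι : ℝ)⁻¹ *
        ∑ i, ((((1 : Matrix (BS n) (BS n) ℂ) ⊗ₖ σq) *
            ((∑ dd : BS n, Matrix.single dd dd (1 : ℂ) ⊗ₖ
                (∑ x, ((PX x * PA i (dd + x) : ℝ) : ℂ) • ρB x))
              - ((2 : ℂ) ^ n)⁻¹ •
                  ((1 : Matrix (BS n) (BS n) ℂ) ⊗ₖ (∑ x, (PX x : ℂ) • ρB x))) *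
            ((1 : Matrix (BS n) (BS n) ℂ) ⊗ₖ σq)) ^ 2).trace.re
      ≤ δ ^ 2 * (2 : ℝ) ^
          (-(- Real.logb 2 (∑ x, (PX x) ^ 2 * ((σq * ρB x * σq) ^ 2).trace.re))) := by
  classical
  have hσH : σq.IsHermitian := hσ.1
  have h2n : ((2:ℝ)^n) ≠ 0 := by positivity
  set R : BS n → BS n → ℝ :=
    fun x y => (((σq * ρB x * σq) * (σq * ρB y * σq)).trace).re with hR
  set QR : BS n → ℝ :=
    fun α => ∑ x, ∑ y, (PX x * sgn α x) * (PX y * sgn α y) * R x y with hQR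
  have TbR : ∀ (a e : BS n → ℝ),
      (((σq * (∑ x, ((a x : ℝ):ℂ) • ρB x) * σq) *
        (σq * (∑ y, ((e y : ℝ):ℂ) • ρB y) * σq)).trace).re
      = ∑ x, ∑ y, a x * e y * R x y := by
    intro a e
    rw [Tbilin, Complex.re_sum]
    refine Finset.sum_congr rfl fun x _ => ?_
    rw [Complex.re_sum]
    refine Finset.sum_congr rfl fun y _ => ?_
    rw [← Complex.ofReal_mul, Complex.re_ofReal_mul]
  have Tr2 : ∀ i : ι,
      ((((1 : Matrix (BS n) (BS n) ℂ) ⊗ₖ σq) *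
          ((∑ dd : BS n, Matrix.single dd dd (1 : ℂ) ⊗ₖ
              (∑ x, ((PX x * PA i (dd + x) : ℝ) : ℂ) • ρB x))
            - ((2 : ℂ) ^ n)⁻¹ •
                ((1 : Matrix (BS n) (BS n) ℂ) ⊗ₖ (∑ x, (PX x : ℂ) • ρB x))) *
          ((1 : Matrix (BS n) (BS n) ℂ) ⊗ₖ σq)) ^ 2).trace.re
      = ((2:ℝ)^n)⁻¹ * ∑ α ∈ (univ : Finset (BS n)).erase 0,
          (bias α (PA i))^2 * QR α := by
    intro i
    have Mid : (∑ dd : BS n, Matrix.single dd dd (1 : ℂ) ⊗ₖ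
            (∑ x, ((PX x * PA i (dd + x) : ℝ) : ℂ) • ρB x))
          - ((2 : ℂ) ^ n)⁻¹ •
              ((1 : Matrix (BS n) (BS n) ℂ) ⊗ₖ (∑ x, (PX x : ℂ) • ρB x))
        = ∑ dd : BS n, Matrix.single dd dd (1 : ℂ) ⊗ₖ
            (∑ x, ((PX x * (PA i (dd+x) - ((2:ℝ)^n)⁻¹) : ℝ) : ℂ) • ρB x) := by
      rw [one_eq_sum_std (κ := BS n), sum_kron, Finset.smul_sum, ← Finset.sum_sub_distrib]
      refine Finset.sum_congr rfl fun dd _ => ?_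
      rw [← Matrix.kronecker_smul, ← kron_sub]
      have hx : (∑ x, ((PX x * PA i (dd + x) : ℝ) : ℂ) • ρB x)
          - ((2:ℂ)^n)⁻¹ • (∑ x, (PX x : ℂ) • ρB x)
          = ∑ x, ((PX x * (PA i (dd+x) - ((2:ℝ)^n)⁻¹) : ℝ) : ℂ) • ρB x := by
        rw [Finset.smul_sum, ← Finset.sum_sub_distrib]
        refine Finset.sum_congr rfl fun x _ => ?_
        rw [smul_smul, ← sub_smul]
        congr 1
        push_cast
        ring
      rw [hx]
    rw [Mid, block_trace, Complex.re_sum]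
    have step : ∀ dd : BS n,
        (((σq * (∑ x, ((PX x * (PA i (dd+x) - ((2:ℝ)^n)⁻¹) : ℝ) : ℂ) • ρB x) * σq) ^ 2).trace).re
        = ∑ x, ∑ y, (PX x * (PA i (dd+x) - ((2:ℝ)^n)⁻¹)) *
            (PX y * (PA i (dd+y) - ((2:ℝ)^n)⁻¹)) * R x y := by
      intro dd
      rw [pow_two]
      exact TbR (fun x => PX x * (PA i (dd+x) - ((2:ℝ)^n)⁻¹))
        (fun y => PX y * (PA i (dd+y) - ((2:ℝ)^n)⁻¹))
    rw [Finset.sum_congr rfl fun dd _ => step dd]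
    rw [juggle PX (PA i) (hPA1 i) R]
  have Qnn : ∀ α : BS n, 0 ≤ QR α := by
    intro α
    have hG : (∑ x, (((PX x * sgn α x : ℝ)):ℂ) • ρB x).IsHermitian :=
      herm_comb _ _ (fun x => (hρ x).1)
    have hmain := trace_sq_re_nonneg_s15 _ (herm_conj3 σq _ hσH hG)
    rw [TbR (fun x => PX x * sgn α x) (fun y => PX y * sgn α y)] at hmain
    exact hmain
  have Rnn : ∀ x : BS n, 0 ≤ R x x := by
    intro x
    exact trace_sq_re_nonneg_s15 _ (herm_conj3 σq _ hσH (hρ x).1)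
  have hPars : ∑ α : BS n, QR α = (2:ℝ)^n * ∑ x, (PX x)^2 * R x x := by
    exact parseval PX R
  have hδα : ∀ α ∈ (univ : Finset (BS n)).erase 0,
      (Fintype.card ι : ℝ)⁻¹ * ∑ i, (bias α (PA i))^2 ≤ δ^2 := by
    intro α hα
    have hne : α ≠ 0 := Finset.ne_of_mem_erase hα
    have h0 : 0 ≤ (Fintype.card ι : ℝ)⁻¹ * ∑ i, (bias α (PA i))^2 :=
      mul_nonneg (inv_nonneg.2 (Nat.cast_nonneg _))
        (Finset.sum_nonneg fun i _ => sq_nonneg _)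
    have hb := hbias α hne
    calc (Fintype.card ι : ℝ)⁻¹ * ∑ i, (bias α (PA i))^2
        = (Real.sqrt ((Fintype.card ι : ℝ)⁻¹ * ∑ i, (bias α (PA i))^2))^2 :=
          (Real.sq_sqrt h0).symm
      _ ≤ δ^2 := pow_le_pow_left₀ (Real.sqrt_nonneg _) hb 2
  have hSR : (∑ x, (PX x)^2 * ((σq * ρB x * σq) ^ 2).trace.re) = ∑ x, (PX x)^2 * R x x := by
    refine Finset.sum_congr rfl fun x _ => ?_
    rw [show (σq * ρB x * σq) ^ 2 = (σq * ρB x * σq) * (σq * ρB x * σq) from pow_two _]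
  rw [neg_neg, hSR]
  have h1 : ∑ i, ((((1 : Matrix (BS n) (BS n) ℂ) ⊗ₖ σq) *
        ((∑ dd : BS n, Matrix.single dd dd (1 : ℂ) ⊗ₖ
            (∑ x, ((PX x * PA i (dd + x) : ℝ) : ℂ) • ρB x))
          - ((2 : ℂ) ^ n)⁻¹ •
              ((1 : Matrix (BS n) (BS n) ℂ) ⊗ₖ (∑ x, (PX x : ℂ) • ρB x))) *
        ((1 : Matrix (BS n) (BS n) ℂ) ⊗ₖ σq)) ^ 2).trace.re
      = ∑ i, ((2:ℝ)^n)⁻¹ * ∑ α ∈ (univ : Finset (BS n)).erase 0,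
          (bias α (PA i))^2 * QR α :=
    Finset.sum_congr rfl fun i _ => Tr2 i
  rw [h1]
  have main : (Fintype.card ι : ℝ)⁻¹ * ∑ i, ((2:ℝ)^n)⁻¹ *
        ∑ α ∈ (univ : Finset (BS n)).erase 0, (bias α (PA i))^2 * QR α
      = ((2:ℝ)^n)⁻¹ * ∑ α ∈ (univ : Finset (BS n)).erase 0,
          ((Fintype.card ι : ℝ)⁻¹ * ∑ i, (bias α (PA i))^2) * QR α := by
    simp only [Finset.mul_sum, Finset.sum_mul]
    rw [Finset.sum_comm]
    refine Finset.sum_congr rfl fun α _ => Finset.sum_congr rfl fun i _ => ?_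
    ring
  rw [main]
  set S0 := ∑ x, (PX x)^2 * R x x with hS0
  have hS0nn : 0 ≤ S0 :=
    Finset.sum_nonneg fun x _ => mul_nonneg (sq_nonneg _) (Rnn x)
  have chain : ((2:ℝ)^n)⁻¹ * ∑ α ∈ (univ : Finset (BS n)).erase 0,
        ((Fintype.card ι : ℝ)⁻¹ * ∑ i, (bias α (PA i))^2) * QR α ≤ δ^2 * S0 := by
    calc ((2:ℝ)^n)⁻¹ * ∑ α ∈ (univ : Finset (BS n)).erase 0,
          ((Fintype.card ι : ℝ)⁻¹ * ∑ i, (bias α (PA i))^2) * QR α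
        ≤ ((2:ℝ)^n)⁻¹ * ∑ α ∈ (univ : Finset (BS n)).erase 0, δ^2 * QR α := by
          apply mul_le_mul_of_nonneg_left _ (by positivity)
          exact Finset.sum_le_sum fun α hα =>
            mul_le_mul_of_nonneg_right (hδα α hα) (Qnn α)
      _ ≤ ((2:ℝ)^n)⁻¹ * ∑ α : BS n, δ^2 * QR α := by
          apply mul_le_mul_of_nonneg_left _ (by positivity)
          exact Finset.sum_le_sum_of_subset_of_nonneg (Finset.subset_univ _)
            (fun α _ _ => mul_nonneg (sq_nonneg δ) (Qnn α))
      _ = δ^2 * S0 := by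
          rw [← Finset.mul_sum, hPars]
          field_simp
  have hfin : S0 ≤ (2:ℝ) ^ (Real.logb 2 S0) := by
    rcases eq_or_lt_of_le hS0nn with h | h
    · rw [← h, Real.logb_zero, Real.rpow_zero]
      norm_num
    · rw [Real.rpow_logb (by norm_num) (by norm_num) h]
  exact le_trans chain (mul_le_mul_of_nonneg_left hfin (sq_nonneg δ))
end

section
/- For ρ_{XB} classical on H_X with X ∈ 𝒳, the conditional min-entropy satisfies H_∞(X) - log dim(H_B) ≤ H_∞(ρ_{XB}|B), where H_∞(X) = -log max_x P_X(x) is the classical min-entropy of the marginal. -/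
open Matrix BigOperators Finset
open scoped Kronecker ComplexOrder

/-- Largest (real) eigenvalue of a matrix: the supremum of real `t` such that `t` is an
eigenvalue of the associated linear endomorphism. -/
noncomputable def lamMax {m : Type*} [Fintype m] [DecidableEq m] (A : Matrix m m ℂ) : ℝ :=
  sSup {t : ℝ | Module.End.HasEigenvalue (Matrix.toLin' A) (t : ℂ)}

section AuxMinEntropy
variable {d : ℕ}

lemma eig_set_eq {A : Matrix (Fin d) (Fin d) ℂ} (hA : A.IsHermitian) :
    {t : ℝ | Module.End.HasEigenvalue (Matrix.toLin' A) (t : ℂ)} = Set.range hA.eigenvalues := by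
  ext t
  have hsp : spectrum ℂ (Matrix.toLin' A) = spectrum ℂ A :=
    AlgEquiv.spectrum_eq Matrix.toLinAlgEquiv' A
  rw [Set.mem_setOf_eq, Module.End.hasEigenvalue_iff_mem_spectrum, hsp,
    show ((t : ℂ)) = algebraMap ℝ ℂ t from rfl, spectrum.algebraMap_mem_iff,
    hA.spectrum_real_eq_range_eigenvalues, Set.mem_range]

lemma lamMax_herm {A : Matrix (Fin d) (Fin d) ℂ} (hA : A.IsHermitian) :
    lamMax A = sSup (Set.range hA.eigenvalues) := by
  rw [lamMax, eig_set_eq hA]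

lemma le_lamMax (hd : 0 < d) {A : Matrix (Fin d) (Fin d) ℂ} (hA : A.IsHermitian) (i : Fin d) :
    hA.eigenvalues i ≤ lamMax A := by
  rw [lamMax_herm hA]
  exact le_csSup (Set.finite_range _).bddAbove ⟨i, rfl⟩

lemma lamMax_le (hd : 0 < d) {A : Matrix (Fin d) (Fin d) ℂ} (hA : A.IsHermitian) {c : ℝ}
    (h : ∀ i, hA.eigenvalues i ≤ c) : lamMax A ≤ c := by
  have : Nonempty (Fin d) := Fin.pos_iff_nonempty.mp hd
  rw [lamMax_herm hA]
  exact csSup_le (Set.range_nonempty _) (by rintro t ⟨i, rfl⟩; exact h i)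

lemma trace_eq_sum_eigs {A : Matrix (Fin d) (Fin d) ℂ} (hA : A.IsHermitian) :
    A.trace = ((∑ i, hA.eigenvalues i : ℝ) : ℂ) := by
  conv_lhs => rw [hA.spectral_theorem]
  rw [Unitary.conjStarAlgAut_apply, Matrix.trace_mul_cycle, Matrix.mem_unitaryGroup_iff'.mp hA.eigenvectorUnitary.2, one_mul,
    Matrix.trace_diagonal]
  push_cast
  rfl

lemma trace_re_eq {A : Matrix (Fin d) (Fin d) ℂ} (hA : A.IsHermitian) :
    A.trace.re = ∑ i, hA.eigenvalues i := by
  rw [trace_eq_sum_eigs hA, Complex.ofReal_re]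

lemma psd_trace_re_nonneg {A : Matrix (Fin d) (Fin d) ℂ} (hA : A.PosSemidef) :
    0 ≤ A.trace.re := by
  rw [trace_re_eq hA.1]
  exact Finset.sum_nonneg fun i _ => hA.eigenvalues_nonneg i

lemma smul_psd {r : ℝ} (hr : 0 ≤ r) {M : Matrix (Fin d) (Fin d) ℂ} (hM : M.PosSemidef) :
    ((r : ℂ) • M).PosSemidef := by
  refine Matrix.PosSemidef.of_dotProduct_mulVec_nonneg ?_ fun x => ?_
  · unfold Matrix.IsHermitian
    rw [Matrix.conjTranspose_smul, hM.1.eq, Complex.star_def, Complex.conj_ofReal]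
  · rw [Matrix.smul_mulVec, dotProduct_smul]
    exact mul_nonneg (by exact_mod_cast hr) (hM.dotProduct_mulVec_nonneg x)

lemma lamMax_le_trace_re (hd : 0 < d) {M : Matrix (Fin d) (Fin d) ℂ} (hM : M.PosSemidef) :
    lamMax M ≤ M.trace.re := by
  refine lamMax_le hd hM.1 fun i => ?_
  rw [trace_re_eq hM.1]
  exact Finset.single_le_sum (fun j _ => hM.eigenvalues_nonneg j) (Finset.mem_univ i)

lemma trace_re_le_card_mul_lamMax (hd : 0 < d) {M : Matrix (Fin d) (Fin d) ℂ}
    (hA : M.IsHermitian) : M.trace.re ≤ d * lamMax M := by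
  rw [trace_re_eq hA]
  calc ∑ i, hA.eigenvalues i ≤ ∑ _i : Fin d, lamMax M :=
        Finset.sum_le_sum fun i _ => le_lamMax hd hA i
    _ = d * lamMax M := by
        rw [Finset.sum_const, Finset.card_univ, Fintype.card_fin, nsmul_eq_mul]

lemma trace_mul_psd_re_nonneg {A B : Matrix (Fin d) (Fin d) ℂ}
    (hA : A.PosSemidef) (hB : B.PosSemidef) : 0 ≤ (A * B).trace.re := by
  open scoped MatrixOrder in
  obtain ⟨S, hSh, hSS⟩ : ∃ S : Matrix (Fin d) (Fin d) ℂ, S.PosSemidef ∧ S * S = A :=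
    ⟨CFC.sqrt A, Matrix.nonneg_iff_posSemidef.mp (CFC.sqrt_nonneg A),
      CFC.sqrt_mul_sqrt_self A (Matrix.nonneg_iff_posSemidef.mpr hA)⟩
  have h1 : A * B = S * S * B := by rw [hSS]
  have h2 : (S * S * B).trace = (S * B * S).trace := by
    rw [Matrix.trace_mul_cycle S B S]
  have h3 : (S * B * S).PosSemidef := by
    have := hB.conjTranspose_mul_mul_same S
    rwa [hSh.1.eq] at this
  rw [h1, h2]
  exact psd_trace_re_nonneg h3

lemma posDef_mul_self {B : Matrix (Fin d) (Fin d) ℂ} (hB : B.PosDef) : (B * B).PosDef := by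
  refine Matrix.PosDef.of_dotProduct_mulVec_pos ?_ fun x hx => ?_
  · unfold Matrix.IsHermitian
    rw [Matrix.conjTranspose_mul, hB.1.eq]
  · have hBx : B *ᵥ x ≠ 0 := by
      intro h
      have := hB.dotProduct_mulVec_pos hx
      rw [h, dotProduct_zero] at this
      exact lt_irrefl _ this
    have hrw : B * B = Bᴴ * B := by rw [hB.1.eq]
    rw [hrw, ← Matrix.mulVec_mulVec, Matrix.dotProduct_mulVec, Matrix.vecMul_conjTranspose,
      star_star]
    exact Matrix.dotProduct_star_self_pos_iff.mpr hBx

lemma inv_sub_one_psd {N : Matrix (Fin d) (Fin d) ℂ} (hN : N.PosDef) (htr : N.trace = 1) :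
    (N⁻¹ - 1).PosSemidef := by
  set ν := hN.1.eigenvalues with hν
  have hpos : ∀ i, 0 < ν i := fun i => hN.eigenvalues_pos i
  have hsum : ∑ i, ν i = 1 := by
    have := trace_eq_sum_eigs hN.1
    rw [htr] at this
    exact_mod_cast this.symm
  have hle1 : ∀ i, ν i ≤ 1 := fun i => by
    calc ν i ≤ ∑ j, ν j :=
          Finset.single_le_sum (fun j _ => (hpos j).le) (Finset.mem_univ i)
      _ = 1 := hsum
  have hinv1 : ∀ i, 1 ≤ (ν i)⁻¹ := fun i => by
    have h1 := hpos i
    have h2 := hle1 i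
    have h3 : ν i * (ν i)⁻¹ = 1 := mul_inv_cancel₀ (ne_of_gt h1)
    nlinarith [inv_pos.mpr h1]
  set U : Matrix (Fin d) (Fin d) ℂ := (hN.1.eigenvectorUnitary : Matrix (Fin d) (Fin d) ℂ)
    with hU
  have hUU : star U * U = 1 := Matrix.mem_unitaryGroup_iff'.mp hN.1.eigenvectorUnitary.2
  have hUU' : U * star U = 1 := Matrix.mem_unitaryGroup_iff.mp hN.1.eigenvectorUnitary.2
  set D' : Matrix (Fin d) (Fin d) ℂ := Matrix.diagonal (fun i => ((ν i)⁻¹ : ℂ)) with hD'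
  have hDD' : Matrix.diagonal (RCLike.ofReal ∘ ν) * D' = 1 := by
    rw [hD', Matrix.diagonal_mul_diagonal]
    have : (fun i => (RCLike.ofReal ∘ ν) i * ((ν i)⁻¹ : ℂ)) = fun _ => (1 : ℂ) := by
      funext i
      have hne : ((ν i : ℂ)) ≠ 0 := by exact_mod_cast (ne_of_gt (hpos i))
      simp [Function.comp, mul_inv_cancel₀ hne]
    rw [this, Matrix.diagonal_one]
  have hNW : N * (U * D' * star U) = 1 := by
    conv_lhs => rw [hN.1.spectral_theorem]
    calc U * Matrix.diagonal (RCLike.ofReal ∘ ν) * star U * (U * D' * star U)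
        = U * Matrix.diagonal (RCLike.ofReal ∘ ν) * (star U * U) * D' * star U := by
          noncomm_ring
      _ = U * (Matrix.diagonal (RCLike.ofReal ∘ ν) * D') * star U := by
          rw [hUU]; noncomm_ring
      _ = 1 := by rw [hDD', mul_one, hUU']
  have hNinv : N⁻¹ = U * D' * star U := Matrix.inv_eq_right_inv hNW
  have hsub : N⁻¹ - 1 = U * (D' - 1) * star U := by
    rw [hNinv, Matrix.mul_sub, Matrix.sub_mul, Matrix.mul_one, hUU']
  have hD'1 : D' - 1 = Matrix.diagonal (fun i => (((ν i)⁻¹ - 1 : ℝ) : ℂ)) := by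
    rw [hD', ← Matrix.diagonal_one, Matrix.diagonal_sub]
    congr 1
    funext i
    push_cast
    ring
  have hpsdD : (D' - 1).PosSemidef := by
    rw [hD'1]
    refine Matrix.PosSemidef.diagonal fun i => ?_
    rw [Pi.zero_apply, Complex.zero_le_real]
    linarith [hinv1 i]
  have := hpsdD.mul_mul_conjTranspose_same U
  rwa [← Matrix.star_eq_conjTranspose, ← hsub] at this

end AuxMinEntropy

/-- `H_∞(X) - log dim(H_B) ≤ H_∞(ρ_XB|B)` for a state classical on `H_X`, where the
conditional min-entropy is the sup over normalized invertible `σ_B = (σq^4)⁻¹` of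
`-log₂ max_x λ_max(P_X(x) σ_B^{-1/2} ρ_B^x σ_B^{-1/2})`. -/
theorem classical_min_entropy_bound {X : Type*} [Fintype X] [Nonempty X] {d : ℕ}
    (hd : 0 < d)
    (P : X → ℝ) (hP0 : ∀ x, 0 ≤ P x) (hP1 : ∑ x, P x = 1)
    (ρB : X → Matrix (Fin d) (Fin d) ℂ)
    (hρ : ∀ x, (ρB x).PosSemidef) (hρtr : ∀ x, (ρB x).trace = 1) :
    (- Real.logb 2 (⨆ x, P x)) - Real.logb 2 d
      ≤ sSup { h : ℝ | ∃ σq : Matrix (Fin d) (Fin d) ℂ, σq.PosDef ∧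
          ((σq ^ 4)⁻¹).trace = 1 ∧
          h = - Real.logb 2 (⨆ x, lamMax ((P x : ℂ) • (σq ^ 2 * ρB x * σq ^ 2))) } := by
  classical
  have hdpos : (0:ℝ) < d := by exact_mod_cast hd
  obtain ⟨x₁, hx₁⟩ : ∃ x, 0 < P x := by
    by_contra h
    push_neg at h
    have hz : ∀ x, P x = 0 := fun x => le_antisymm (h x) (hP0 x)
    rw [Finset.sum_congr rfl (fun x _ => hz x), Finset.sum_const, smul_zero] at hP1
    norm_num at hP1
  have hSle : ∀ x, P x ≤ ⨆ y, P y := fun x => le_ciSup (Set.finite_range P).bddAbove x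
  have hSpos : 0 < ⨆ x, P x := lt_of_lt_of_le hx₁ (hSle x₁)
  -- generic lower bound on the sup of lamMax, for any admissible σ
  have key : ∀ σ : Matrix (Fin d) (Fin d) ℂ, σ.PosDef → ((σ ^ 4)⁻¹).trace = 1 →
      P x₁ / d ≤ ⨆ x, lamMax ((P x : ℂ) • (σ ^ 2 * ρB x * σ ^ 2)) := by
    intro σ hσ htr
    have hσ2 : (σ ^ 2).PosDef := by
      rw [pow_two]; exact posDef_mul_self hσ
    have hσ4 : (σ ^ 4).PosDef := by
      have := posDef_mul_self hσ2
      rwa [← pow_add] at this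
    have hσ4inv : ((σ ^ 4)⁻¹).PosDef := hσ4.inv
    have hinvinv : ((σ ^ 4)⁻¹)⁻¹ = σ ^ 4 :=
      Matrix.nonsing_inv_nonsing_inv _ (isUnit_iff_ne_zero.mpr (ne_of_gt hσ4.det_pos))
    have hpsd1 : (σ ^ 4 - 1).PosSemidef := by
      have := inv_sub_one_psd hσ4inv htr
      rwa [hinvinv] at this
    -- trace of σ²ρσ² is at least 1
    have htr4 : ∀ x, (σ ^ 2 * ρB x * σ ^ 2).trace = (ρB x * σ ^ 4).trace := by
      intro x
      rw [Matrix.trace_mul_cycle, ← pow_add, Matrix.trace_mul_comm]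
    have htrge : (1:ℝ) ≤ ((ρB x₁) * σ ^ 4).trace.re := by
      have hsplit : (ρB x₁) * σ ^ 4 = (ρB x₁) * (σ ^ 4 - 1) + ρB x₁ := by
        rw [Matrix.mul_sub, Matrix.mul_one]; abel
      have h0 := trace_mul_psd_re_nonneg (hρ x₁) hpsd1
      rw [hsplit, Matrix.trace_add, Complex.add_re, hρtr x₁]
      simp only [Complex.one_re]
      linarith
    -- the matrix for x₁
    set M₁ : Matrix (Fin d) (Fin d) ℂ := (P x₁ : ℂ) • (σ ^ 2 * ρB x₁ * σ ^ 2) with hM₁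
    have hconj : (σ ^ 2 * ρB x₁ * σ ^ 2).PosSemidef := by
      have := (hρ x₁).conjTranspose_mul_mul_same (σ ^ 2)
      rwa [hσ2.1.eq] at this
    have hM₁psd : M₁.PosSemidef := smul_psd (hP0 x₁) hconj
    have hM₁tr : M₁.trace.re = P x₁ * ((ρB x₁) * σ ^ 4).trace.re := by
      rw [hM₁, Matrix.trace_smul, htr4 x₁, smul_eq_mul, Complex.re_ofReal_mul]
    have h5 : P x₁ ≤ M₁.trace.re := by
      rw [hM₁tr]
      nlinarith [hx₁, htrge]
    have h6 : M₁.trace.re ≤ d * lamMax M₁ := trace_re_le_card_mul_lamMax hd hM₁psd.1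
    have h7 : P x₁ / d ≤ lamMax M₁ := by
      rw [div_le_iff₀ hdpos]
      nlinarith
    exact h7.trans (le_ciSup (f := fun x => lamMax ((P x : ℂ) • (σ ^ 2 * ρB x * σ ^ 2)))
      (Set.finite_range _).bddAbove x₁)
  -- Bounded above
  have hBdd : BddAbove { h : ℝ | ∃ σq : Matrix (Fin d) (Fin d) ℂ, σq.PosDef ∧
          ((σq ^ 4)⁻¹).trace = 1 ∧
          h = - Real.logb 2 (⨆ x, lamMax ((P x : ℂ) • (σq ^ 2 * ρB x * σq ^ 2))) } := by
    refine ⟨- Real.logb 2 (P x₁ / d), ?_⟩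
    rintro h ⟨σ, hσ, htr, rfl⟩
    have := key σ hσ htr
    have hq : 0 < P x₁ / d := div_pos hx₁ hdpos
    exact neg_le_neg (Real.logb_le_logb_of_le one_lt_two hq this)
  -- the witness
  set c : ℝ := (d : ℝ) ^ ((1:ℝ)/4) with hc
  have hcpos : 0 < c := Real.rpow_pos_of_pos hdpos _
  have hc4 : c ^ 4 = d := by
    rw [hc, ← Real.rpow_natCast ((d:ℝ) ^ ((1:ℝ)/4)) 4, ← Real.rpow_mul hdpos.le]
    norm_num
  set σq : Matrix (Fin d) (Fin d) ℂ := Matrix.diagonal (fun _ => (c : ℂ)) with hσq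
  have hσqPD : σq.PosDef := by
    rw [hσq]
    exact Matrix.posDef_diagonal_iff.mpr fun i => Complex.zero_lt_real.mpr hcpos
  have hc4C : ((c : ℂ)) ^ 4 = (d : ℂ) := by exact_mod_cast congrArg (Complex.ofReal) hc4
  have hdC : ((d : ℂ)) ≠ 0 := by exact_mod_cast hd.ne'
  have hσq4 : σq ^ 4 = Matrix.diagonal (fun _ => (d : ℂ)) := by
    rw [hσq, Matrix.diagonal_pow,
      show ((fun _ : Fin d => (c : ℂ)) ^ 4) = (fun _ : Fin d => (d : ℂ)) from
        funext fun i => by simpa using hc4C]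
  have hdiaginv : (Matrix.diagonal (fun _ : Fin d => (d : ℂ)))⁻¹
      = Matrix.diagonal (fun _ : Fin d => ((d : ℂ))⁻¹) := by
    refine Matrix.inv_eq_right_inv ?_
    rw [Matrix.diagonal_mul_diagonal,
      show (fun i : Fin d => (d : ℂ) * ((d : ℂ))⁻¹) = fun _ => (1 : ℂ) from
        funext fun i => mul_inv_cancel₀ hdC, Matrix.diagonal_one]
  have hσqtr : ((σq ^ 4)⁻¹).trace = 1 := by
    rw [hσq4, hdiaginv, Matrix.trace_diagonal, Finset.sum_const, Finset.card_univ,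
      Fintype.card_fin, nsmul_eq_mul]
    field_simp
  have hσq2 : σq ^ 2 = ((c : ℂ) ^ 2) • (1 : Matrix (Fin d) (Fin d) ℂ) := by
    rw [hσq, Matrix.diagonal_pow, Matrix.smul_one_eq_diagonal,
      show ((fun _ : Fin d => (c : ℂ)) ^ 2) = (fun _ : Fin d => (c : ℂ) ^ 2) from rfl]
  have hMeq : ∀ x, (P x : ℂ) • (σq ^ 2 * ρB x * σq ^ 2) = ((P x * d : ℝ) : ℂ) • ρB x := by
    intro x
    rw [hσq2]
    rw [Matrix.smul_mul, Matrix.smul_mul, Matrix.mul_smul, Matrix.one_mul, Matrix.mul_one,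
      smul_smul, smul_smul]
    congr 1
    push_cast
    rw [← hc4C]
    ring
  -- bound for the witness
  set A : ℝ := ⨆ x, lamMax ((P x : ℂ) • (σq ^ 2 * ρB x * σq ^ 2)) with hA
  have hmem : - Real.logb 2 A ∈ { h : ℝ | ∃ σ : Matrix (Fin d) (Fin d) ℂ, σ.PosDef ∧
          ((σ ^ 4)⁻¹).trace = 1 ∧
          h = - Real.logb 2 (⨆ x, lamMax ((P x : ℂ) • (σ ^ 2 * ρB x * σ ^ 2))) } :=
    ⟨σq, hσqPD, hσqtr, rfl⟩
  have hApos : 0 < A := by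
    have := key σq hσqPD hσqtr
    have hq : 0 < P x₁ / d := div_pos hx₁ hdpos
    exact lt_of_lt_of_le hq this
  have hAle : A ≤ (⨆ x, P x) * d := by
    rw [hA]
    refine ciSup_le fun x => ?_
    rw [hMeq x]
    have hpsd : (((P x * d : ℝ) : ℂ) • ρB x).PosSemidef :=
      smul_psd (mul_nonneg (hP0 x) hdpos.le) (hρ x)
    have h1 : lamMax (((P x * d : ℝ) : ℂ) • ρB x) ≤ ((((P x * d : ℝ) : ℂ)) • ρB x).trace.re :=
      lamMax_le_trace_re hd hpsd
    have h2 : ((((P x * d : ℝ) : ℂ)) • ρB x).trace.re = P x * d := by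
      rw [Matrix.trace_smul, smul_eq_mul, Complex.re_ofReal_mul, hρtr x]
      simp
    rw [h2] at h1
    have := hSle x
    nlinarith
  -- conclude
  have hfinal : - Real.logb 2 (⨆ x, P x) - Real.logb 2 d ≤ - Real.logb 2 A := by
    have h1 : Real.logb 2 A ≤ Real.logb 2 ((⨆ x, P x) * d) :=
      Real.logb_le_logb_of_le one_lt_two hApos hAle
    have h2 : Real.logb 2 ((⨆ x, P x) * d) = Real.logb 2 (⨆ x, P x) + Real.logb 2 d :=
      Real.logb_mul (ne_of_gt hSpos) (ne_of_gt hdpos)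
    linarith
  exact hfinal.trans (le_csSup hBdd hmem)
end
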